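/- Let a, b, c be real numbers with a² − b² = 4c. Then there is an isomorphism of ℝ-algebras ℝ[x₁,x₂,y]/(x₁·x₂, x₁² + x₂², y² + (a·x₁ + b·x₂)·y + c·x₁²) ≅ ℝ[u₁,u₂,u₃]/(u₁², u₂², u₃²). -/

import Mathlib

open MvPolynomial

noncomputable def phi0 (a b : ℝ) : MvPolynomial (Fin 3) ℝ →ₐ[ℝ] MvPolynomial (Fin 3) ℝ :=
  aeval ![C (2⁻¹:ℝ) * (X 0 + X 1), C (2⁻¹:ℝ) * (X 0 - X 1),
    C (2⁻¹:ℝ) * X 2 - C a * C (2⁻¹:ℝ)^2 * (X 0 + X 1) - C b * C (2⁻¹:ℝ)^2 * (X 0 - X 1)]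

noncomputable def psi0 (a b : ℝ) : MvPolynomial (Fin 3) ℝ →ₐ[ℝ] MvPolynomial (Fin 3) ℝ :=
  aeval ![X 0 + X 1, X 0 - X 1, 2 * X 2 + C a * X 0 + C b * X 1]

lemma mem3 {R} [CommRing R] {g1 g2 g3 p : R} (e1 e2 e3 : R)
    (hp : p = e1*g1+e2*g2+e3*g3) : p ∈ Ideal.span {g1,g2,g3} := by
  subst hp
  exact add_mem (add_mem (Ideal.mul_mem_left _ _ (Ideal.subset_span (by simp)))
    (Ideal.mul_mem_left _ _ (Ideal.subset_span (by simp))))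
    (Ideal.mul_mem_left _ _ (Ideal.subset_span (by simp)))

set_option maxHeartbeats 2000000 in
theorem s2_bundle_over_cp2_connsum_conj_cp2_cohomology_iso (a b c : ℝ)
    (h : a ^ 2 - b ^ 2 = 4 * c) :
    Nonempty
      ((MvPolynomial (Fin 3) ℝ ⧸
          Ideal.span {(X 0 : MvPolynomial (Fin 3) ℝ) * X 1, X 0 ^ 2 + X 1 ^ 2,
            X 2 ^ 2 + (C a * X 0 + C b * X 1) * X 2 + C c * X 0 ^ 2}) ≃ₐ[ℝ]
        (MvPolynomial (Fin 3) ℝ ⧸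
          Ideal.span {(X 0 : MvPolynomial (Fin 3) ℝ) ^ 2, X 1 ^ 2, X 2 ^ 2})) := by
  have r1 : (C (2⁻¹:ℝ) : MvPolynomial (Fin 3) ℝ) * 2 = 1 := by
    rw [show (2 : MvPolynomial (Fin 3) ℝ) = C (2:ℝ) from (map_ofNat C 2).symm, ← C_mul]
    norm_num
  have r2 : (C a : MvPolynomial (Fin 3) ℝ)^2 = C b^2 + 4*C c := by
    rw [← C_pow, ← C_pow, show (4 : MvPolynomial (Fin 3) ℝ) = C (4:ℝ) from (map_ofNat C 4).symm,
      ← C_mul, ← C_add]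
    exact congrArg C (by linarith)
  set t : MvPolynomial (Fin 3) ℝ := C (2⁻¹:ℝ) with ht
  -- evaluation lemmas
  have p0 : phi0 a b (X 0) = t * (X 0 + X 1) := by simp [phi0, ht]
  have p1 : phi0 a b (X 1) = t * (X 0 - X 1) := by simp [phi0, ht]
  have p2 : phi0 a b (X 2) = t * X 2 - C a * t^2 * (X 0 + X 1) - C b * t^2 * (X 0 - X 1) := by
    simp [phi0, ht]
  have pc : ∀ r : ℝ, phi0 a b (C r) = C r := fun r => by simp [phi0, algebraMap_eq]
  have q0 : psi0 a b (X 0) = X 0 + X 1 := by simp [psi0]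
  have q1 : psi0 a b (X 1) = X 0 - X 1 := by simp [psi0]
  have q2 : psi0 a b (X 2) = 2 * X 2 + C a * X 0 + C b * X 1 := by simp [psi0]
  have qc : ∀ r : ℝ, psi0 a b (C r) = C r := fun r => by simp [psi0, algebraMap_eq]
  set I₁ : Ideal (MvPolynomial (Fin 3) ℝ) :=
    Ideal.span {(X 0 : MvPolynomial (Fin 3) ℝ) * X 1, X 0 ^ 2 + X 1 ^ 2,
      X 2 ^ 2 + (C a * X 0 + C b * X 1) * X 2 + C c * X 0 ^ 2} with hI₁
  set I₂ : Ideal (MvPolynomial (Fin 3) ℝ) :=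
    Ideal.span {(X 0 : MvPolynomial (Fin 3) ℝ) ^ 2, X 1 ^ 2, X 2 ^ 2} with hI₂
  -- memberships for phi0
  have m1 : phi0 a b (X 0 * X 1) ∈ I₂ := by
    refine mem3 (t^2) (-(t^2)) 0 ?_
    rw [map_mul, p0, p1]; ring
  have m2 : phi0 a b (X 0 ^ 2 + X 1 ^ 2) ∈ I₂ := by
    refine mem3 (2*t^2) (2*t^2) 0 ?_
    rw [map_add, map_pow, map_pow, p0, p1]; ring
  have m3 : phi0 a b (X 2 ^ 2 + (C a * X 0 + C b * X 1) * X 2 + C c * X 0 ^ 2) ∈ I₂ := by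
    refine mem3 (C c * t^2 - (C a + C b)^2 * t^4) (C c * t^2 - (C a - C b)^2 * t^4) (t^2) ?_
    rw [map_add, map_add, map_pow, map_mul, map_add, map_mul, map_mul, map_mul, map_pow,
      p0, p1, p2, pc, pc, pc]
    linear_combination
      (-(C a + C b)*t^2*(X 0*X 2) - (C a - C b)*t^2*(X 1*X 2)
        + (C a + C b)^2*t^3*X 0^2 + (C a - C b)^2*t^3*X 1^2
        + 2*C c*t^2*(2*t-1)*(X 0*X 1)) * r1
      + (2*t^3*(t-1)*(X 0*X 1)) * r2
  -- memberships for psi0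
  have n1 : psi0 a b (X 0 ^ 2) ∈ I₁ := by
    refine mem3 2 1 0 ?_
    rw [map_pow, q0]; ring
  have n2 : psi0 a b (X 1 ^ 2) ∈ I₁ := by
    refine mem3 (-2) 1 0 ?_
    rw [map_pow, q1]; ring
  have n3 : psi0 a b (X 2 ^ 2) ∈ I₁ := by
    refine mem3 (2 * C a * C b) (C b ^ 2) 4 ?_
    rw [map_pow, q2]
    linear_combination (X 0 ^ 2) * r2
  have hφ : ∀ p ∈ I₁, ((Ideal.Quotient.mkₐ ℝ I₂).comp (phi0 a b)) p = 0 := by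
    intro p hp
    rw [AlgHom.comp_apply, Ideal.Quotient.mkₐ_eq_mk, Ideal.Quotient.eq_zero_iff_mem]
    have hle : I₁ ≤ Ideal.comap (phi0 a b) I₂ := by
      rw [hI₁, Ideal.span_le]
      rintro q (rfl | rfl | rfl)
      exacts [Ideal.mem_comap.mpr m1, Ideal.mem_comap.mpr m2, Ideal.mem_comap.mpr m3]
    exact Ideal.mem_comap.mp (hle hp)
  have hψ : ∀ p ∈ I₂, ((Ideal.Quotient.mkₐ ℝ I₁).comp (psi0 a b)) p = 0 := by
    intro p hp
    rw [AlgHom.comp_apply, Ideal.Quotient.mkₐ_eq_mk, Ideal.Quotient.eq_zero_iff_mem]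
    have hle : I₂ ≤ Ideal.comap (psi0 a b) I₁ := by
      rw [hI₂, Ideal.span_le]
      rintro q (rfl | rfl | rfl)
      exacts [Ideal.mem_comap.mpr n1, Ideal.mem_comap.mpr n2, Ideal.mem_comap.mpr n3]
    exact Ideal.mem_comap.mp (hle hp)
  let F := Ideal.Quotient.liftₐ I₁ ((Ideal.Quotient.mkₐ ℝ I₂).comp (phi0 a b)) hφ
  let G := Ideal.Quotient.liftₐ I₂ ((Ideal.Quotient.mkₐ ℝ I₁).comp (psi0 a b)) hψ
  have Fmk : ∀ p, F (Ideal.Quotient.mk I₁ p) = Ideal.Quotient.mk I₂ (phi0 a b p) := by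
    intro p
    rw [show F = Ideal.Quotient.liftₐ I₁ ((Ideal.Quotient.mkₐ ℝ I₂).comp (phi0 a b)) hφ from rfl,
      Ideal.Quotient.liftₐ_apply]
    rfl
  have Gmk : ∀ p, G (Ideal.Quotient.mk I₂ p) = Ideal.Quotient.mk I₁ (psi0 a b p) := by
    intro p
    rw [show G = Ideal.Quotient.liftₐ I₂ ((Ideal.Quotient.mkₐ ℝ I₁).comp (psi0 a b)) hψ from rfl,
      Ideal.Quotient.liftₐ_apply]
    rfl
  have comp1 : ∀ i : Fin 3, phi0 a b (psi0 a b (X i)) = X i := by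
    intro i
    fin_cases i
    · show phi0 a b (psi0 a b (X 0)) = X 0
      rw [q0, map_add, p0, p1]
      linear_combination (X 0 : MvPolynomial (Fin 3) ℝ) * r1
    · show phi0 a b (psi0 a b (X 1)) = X 1
      rw [q1, map_sub, p0, p1]
      linear_combination (X 1 : MvPolynomial (Fin 3) ℝ) * r1
    · show phi0 a b (psi0 a b (X 2)) = X 2
      rw [q2]
      simp only [map_add, map_sub, map_mul, map_pow, map_ofNat, pc, p0, p1, p2]
      linear_combination ((X 2 : MvPolynomial (Fin 3) ℝ)
        - t*(C a*(X 0 + X 1) + C b*(X 0 - X 1))) * r1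
  have comp2 : ∀ i : Fin 3, psi0 a b (phi0 a b (X i)) = X i := by
    intro i
    fin_cases i
    · show psi0 a b (phi0 a b (X 0)) = X 0
      rw [p0, map_mul, map_add, qc, q0, q1]
      linear_combination (X 0 : MvPolynomial (Fin 3) ℝ) * r1
    · show psi0 a b (phi0 a b (X 1)) = X 1
      rw [p1, map_mul, map_sub, qc, q0, q1]
      linear_combination (X 1 : MvPolynomial (Fin 3) ℝ) * r1
    · show psi0 a b (phi0 a b (X 2)) = X 2
      rw [p2]
      simp only [map_add, map_sub, map_mul, map_pow, map_ofNat, qc, q0, q1, q2]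
      rw [show psi0 a b t = t from qc _]
      linear_combination ((X 2 : MvPolynomial (Fin 3) ℝ)
        - t*(C a*X 0 + C b*X 1)) * r1
  refine ⟨AlgEquiv.ofAlgHom F G ?_ ?_⟩
  · apply Ideal.Quotient.algHom_ext
    apply MvPolynomial.algHom_ext
    intro i
    rw [AlgHom.comp_apply, AlgHom.comp_apply, AlgHom.comp_apply, Ideal.Quotient.mkₐ_eq_mk,
      Gmk, Fmk, AlgHom.id_apply, comp1 i]
  · apply Ideal.Quotient.algHom_ext
    apply MvPolynomial.algHom_ext
    intro i
    rw [AlgHom.comp_apply, AlgHom.comp_apply, AlgHom.comp_apply, Ideal.Quotient.mkₐ_eq_mk,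
      Fmk, Gmk, AlgHom.id_apply, comp2 i]
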